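/- For even n ≥ 4, the dihedral group D_{2n} has exactly n² + 4n + 4 endomorphisms and exactly n·φ(n) automorphisms. -/

import Mathlib

open DihedralGroup

namespace DihAux
variable {n : ℕ} [NeZero n]
set_option linter.unusedSectionVars false

theorem pow_mod (x : DihedralGroup n) (hx : x ^ n = 1) (a : ℕ) : x ^ a = x ^ (a % n) := by
  conv_lhs => rw [← Nat.div_add_mod a n]
  rw [pow_add, pow_mul, hx, one_pow, one_mul]

theorem pow_val_add (x : DihedralGroup n) (hx : x ^ n = 1) (i j : ZMod n) :
    x ^ (i + j).val = x ^ i.val * x ^ j.val := by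
  rw [← pow_add, ZMod.val_add, ← pow_mod x hx]

theorem pow_val_neg (x : DihedralGroup n) (hx : x ^ n = 1) (i : ZMod n) :
    x ^ (-i).val = (x ^ i.val)⁻¹ := by
  have h := pow_val_add x hx i (-i)
  rw [add_neg_cancel] at h
  simp only [ZMod.val_zero, pow_zero] at h
  exact (inv_eq_of_mul_eq_one_right h.symm).symm

theorem comm_pow (x y : DihedralGroup n) (hxy : x * y = y * x⁻¹) (m : ℕ) :
    x ^ m * y = y * (x ^ m)⁻¹ := by
  induction m with
  | zero => simp
  | succ m ih =>
    rw [pow_succ', mul_assoc, ih, ← mul_assoc, hxy]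
    group

theorem r_pow (a : ZMod n) (k : ℕ) : (r a : DihedralGroup n) ^ k = r ((k : ZMod n) * a) := by
  induction k with
  | zero => rw [pow_zero, one_def, Nat.cast_zero, zero_mul]
  | succ k ih =>
    rw [pow_succ, ih, r_mul_r]
    congr 1
    push_cast
    ring

theorem pow_n_eq_one (heven : Even n) (x : DihedralGroup n) : x ^ n = 1 := by
  obtain ⟨m, hm⟩ := heven
  cases x with
  | r i => rw [r_pow, ZMod.natCast_self, zero_mul, one_def]
  | sr i =>
    have h2 : sr i ^ n = (sr i ^ 2) ^ m := by
      rw [← pow_mul]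
      congr 1
      omega
    rw [h2, sq, sr_mul_self, one_pow]

/-- The endomorphism determined by images `x` of `r 1` and `y` of `sr 0`. -/
def ofPair (x y : DihedralGroup n) (hx : x ^ n = 1) (hy : y * y = 1)
    (hxy : x * y = y * x⁻¹) : DihedralGroup n →* DihedralGroup n :=
  MonoidHom.mk' (fun g => match g with
    | .r i => x ^ i.val
    | .sr i => y * x ^ i.val) (by
      rintro (i | i) (j | j) <;>
        simp only [r_mul_r, r_mul_sr, sr_mul_r, sr_mul_sr]
      · exact pow_val_add x hx i j
      · show y * x ^ (j - i).val = x ^ i.val * (y * x ^ j.val)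
        rw [← mul_assoc, comm_pow x y hxy, mul_assoc, ← pow_val_neg x hx,
          ← pow_val_add x hx, sub_eq_neg_add]
      · show y * x ^ (i + j).val = y * x ^ i.val * x ^ j.val
        rw [pow_val_add x hx, mul_assoc]
      · show x ^ (j - i).val = (y * x ^ i.val) * (y * x ^ j.val)
        rw [← mul_assoc, mul_assoc y _ y, comm_pow x y hxy, ← mul_assoc, hy, one_mul,
          ← pow_val_neg x hx, ← pow_val_add x hx, neg_add_eq_sub])

@[simp] theorem ofPair_r (x y : DihedralGroup n) (hx hy hxy) (i : ZMod n) :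
    ofPair x y hx hy hxy (r i) = x ^ i.val := rfl

@[simp] theorem ofPair_sr (x y : DihedralGroup n) (hx hy hxy) (i : ZMod n) :
    ofPair x y hx hy hxy (sr i) = y * x ^ i.val := rfl

theorem ofPair_r_one (x y : DihedralGroup n) (hx hy hxy) (h1 : 1 < n) :
    ofPair x y hx hy hxy (r 1) = x := by
  haveI : Fact (1 < n) := ⟨h1⟩
  rw [ofPair_r, ZMod.val_one, pow_one]

theorem ofPair_sr_zero (x y : DihedralGroup n) (hx hy hxy) :
    ofPair x y hx hy hxy (sr 0) = y := by
  rw [ofPair_sr, ZMod.val_zero, pow_zero, mul_one]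

theorem hom_eq_ofPair (f : DihedralGroup n →* DihedralGroup n)
    (hx : f (r 1) ^ n = 1) (hy : f (sr 0) * f (sr 0) = 1)
    (hxy : f (r 1) * f (sr 0) = f (sr 0) * (f (r 1))⁻¹) :
    f = ofPair (f (r 1)) (f (sr 0)) hx hy hxy := by
  ext g
  cases g with
  | r i =>
    rw [ofPair_r, ← map_pow, r_one_pow, ZMod.natCast_zmod_val]
  | sr i =>
    rw [ofPair_sr, ← map_pow, r_one_pow, ZMod.natCast_zmod_val, ← map_mul, sr_mul_r, zero_add]

theorem hom_rel₁ (f : DihedralGroup n →* DihedralGroup n) : f (sr 0) * f (sr 0) = 1 := by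
  rw [← map_mul, sr_mul_self, map_one]

theorem hom_rel₂ (f : DihedralGroup n →* DihedralGroup n) :
    f (r 1) * f (sr 0) = f (sr 0) * (f (r 1))⁻¹ := by
  rw [← map_inv, ← map_mul, ← map_mul, r_mul_sr]
  congr 1
  show (sr (0 - 1) : DihedralGroup n) = sr 0 * (r 1)⁻¹
  have : ((r 1)⁻¹ : DihedralGroup n) = r (-1) := rfl
  rw [this, sr_mul_r, zero_sub, ← sub_eq_add_neg, zero_sub]

end DihAux

namespace DihAux
variable {n : ℕ} [NeZero n]

theorem ofPair_congr {x x' y y' : DihedralGroup n} (hxx : x = x') (hyy : y = y')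
    {h1 h2 h3 h1' h2' h3'} : ofPair x y h1 h2 h3 = ofPair x' y' h1' h2' h3' := by
  subst hxx; subst hyy; rfl

abbrev K (n : ℕ) := {c : ZMod n // c + c = 0}

theorem K_card (hn : 4 ≤ n) (heven : Even n) : Nat.card (K n) = 2 := by
  obtain ⟨m, hm⟩ := heven
  have hm0 : 0 < m := by omega
  have hmem : ((m : ZMod n) + (m : ZMod n) = 0) := by
    rw [← Nat.cast_add, ← hm, ZMod.natCast_self]
  have hne : ((m : ZMod n)) ≠ 0 := by
    rw [Ne, ZMod.natCast_eq_zero_iff]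
    intro h
    have := Nat.le_of_dvd hm0 h
    omega
  have : Nat.card (K n) = Nat.card Bool := by
    apply Nat.card_congr
    refine (Equiv.ofBijective (fun b : Bool => if b then (⟨(m : ZMod n), hmem⟩ : K n)
      else ⟨0, by simp⟩) ⟨?_, ?_⟩).symm
    · intro b b' h
      cases b <;> cases b' <;> simp_all [Subtype.ext_iff] <;> exact hne h.symm
    · rintro ⟨c, hc⟩
      have hcv : ((c.val + c.val : ℕ) : ZMod n) = 0 := by
        push_cast [ZMod.natCast_zmod_val]
        exact hc
      rw [ZMod.natCast_eq_zero_iff] at hcv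
      have hlt : c.val < n := ZMod.val_lt c
      have : c.val = 0 ∨ c.val = m := by
        rcases hcv with ⟨k, hk⟩
        have hk2 : k < 2 := by
          by_contra hcon
          push_neg at hcon
          have : n * 2 ≤ n * k := Nat.mul_le_mul_left n hcon
          omega
        interval_cases k <;> omega
      rcases this with h | h
      · exact ⟨false, by simp [Subtype.ext_iff, (ZMod.val_eq_zero c).mp h]⟩
      · refine ⟨true, ?_⟩
        simp only [if_true, Subtype.ext_iff]
        rw [← ZMod.natCast_zmod_val c, h]
  rw [this, Nat.card_eq_fintype_card, Fintype.card_bool]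

variable (n) in
/-- Parameter space for endomorphisms. -/
abbrev T := (K n × K n) ⊕ ((ZMod n × ZMod n) ⊕ ((ZMod n × K n) ⊕ (ZMod n × K n)))

def F (heven : Even n) : T n → (DihedralGroup n →* DihedralGroup n)
  | .inl (a, b) => ofPair (r a.1) (r b.1) (pow_n_eq_one heven _)
      (by rw [r_mul_r, b.2]; exact one_def.symm)
      (by
        have hinv : (r a.1 : DihedralGroup n)⁻¹ = r (-a.1) := rfl
        rw [hinv, r_mul_r, r_mul_r]
        congr 1
        linear_combination a.2)
  | .inr (.inl (a, b)) => ofPair (r a) (sr b) (pow_n_eq_one heven _)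
      (sr_mul_self b)
      (by
        have hinv : (r a : DihedralGroup n)⁻¹ = r (-a) := rfl
        rw [hinv, r_mul_sr, sr_mul_r]
        congr 1
        ring)
  | .inr (.inr (.inl (a, b))) => ofPair (sr a) (r b.1) (pow_n_eq_one heven _)
      (by rw [r_mul_r, b.2]; exact one_def.symm)
      (by
        have hinv : (sr a : DihedralGroup n)⁻¹ = sr a := rfl
        rw [hinv, sr_mul_r, r_mul_sr]
        congr 1
        linear_combination b.2)
  | .inr (.inr (.inr (a, c))) => ofPair (sr a) (sr (a + c.1)) (pow_n_eq_one heven _)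
      (sr_mul_self _)
      (by
        have hinv : (sr a : DihedralGroup n)⁻¹ = sr a := rfl
        rw [hinv, sr_mul_sr, sr_mul_sr]
        congr 1
        linear_combination c.2)

def pairOf : T n → DihedralGroup n × DihedralGroup n
  | .inl (a, b) => (r a.1, r b.1)
  | .inr (.inl (a, b)) => (r a, sr b)
  | .inr (.inr (.inl (a, b))) => (sr a, r b.1)
  | .inr (.inr (.inr (a, c))) => (sr a, sr (a + c.1))

theorem pairOf_injective : Function.Injective (pairOf (n := n)) := by
  rintro (⟨a, b⟩ | ⟨a, b⟩ | ⟨a, b⟩ | ⟨a, c⟩) (⟨a', b'⟩ | ⟨a', b'⟩ | ⟨a', b'⟩ | ⟨a', c'⟩) h <;>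
    simp only [pairOf, Prod.mk.injEq, r.injEq, sr.injEq, reduceCtorEq, false_and,
      and_false] at h
  · obtain ⟨h1, h2⟩ := h
    simp only [Sum.inl.injEq, Prod.mk.injEq]
    exact ⟨Subtype.ext h1, Subtype.ext h2⟩
  · simp only [Sum.inr.injEq, Sum.inl.injEq, Prod.mk.injEq]
    exact h
  · obtain ⟨h1, h2⟩ := h
    simp only [Sum.inr.injEq, Sum.inl.injEq, Prod.mk.injEq]
    exact ⟨h1, Subtype.ext h2⟩
  · obtain ⟨h1, h2⟩ := h
    subst h1
    simp only [Sum.inr.injEq, Prod.mk.injEq]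
    exact ⟨by trivial, Subtype.ext (by linear_combination h2)⟩

theorem evF (heven : Even n) (h1 : 1 < n) (t : T n) :
    ((F heven t) (r 1), (F heven t) (sr 0)) = pairOf t := by
  rcases t with (⟨a, b⟩ | ⟨a, b⟩ | ⟨a, b⟩ | ⟨a, c⟩) <;>
    simp only [F, pairOf, ofPair_r_one _ _ _ _ _ h1, ofPair_sr_zero]

theorem F_bijective (hn : 4 ≤ n) (heven : Even n) : Function.Bijective (F (n := n) heven) := by
  have h1 : 1 < n := by omega
  constructor
  · intro t t' h
    apply pairOf_injective
    rw [← evF heven h1 t, ← evF heven h1 t', h]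
  · intro f
    have hx := pow_n_eq_one heven (f (r 1))
    have hy := hom_rel₁ f
    have hxy := hom_rel₂ f
    have hf := hom_eq_ofPair f hx hy hxy
    rcases hX : f (r 1) with a | a <;> rcases hY : f (sr 0) with b | b
    · -- x = r a, y = r b
      have hb : b + b = 0 := by
        rw [hY, r_mul_r, one_def] at hy
        exact r.inj hy
      have ha : a + a = 0 := by
        have hinv : (r a : DihedralGroup n)⁻¹ = r (-a) := rfl
        rw [hX, hY, r_mul_r, hinv, r_mul_r] at hxy
        have := r.inj hxy
        linear_combination this
      refine ⟨.inl (⟨a, ha⟩, ⟨b, hb⟩), ?_⟩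
      rw [hf]
      simp only [F]
      exact ofPair_congr hX.symm hY.symm
    · refine ⟨.inr (.inl (a, b)), ?_⟩
      rw [hf]
      simp only [F]
      exact ofPair_congr hX.symm hY.symm
    · have hb : b + b = 0 := by
        rw [hY, r_mul_r, one_def] at hy
        exact r.inj hy
      refine ⟨.inr (.inr (.inl (a, ⟨b, hb⟩))), ?_⟩
      rw [hf]
      simp only [F]
      exact ofPair_congr hX.symm hY.symm
    · have hc : (b - a) + (b - a) = 0 := by
        have hinv : (sr a : DihedralGroup n)⁻¹ = sr a := rfl
        rw [hX, hY, sr_mul_sr, hinv, sr_mul_sr] at hxy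
        have := r.inj hxy
        linear_combination this
      refine ⟨.inr (.inr (.inr (a, ⟨b - a, hc⟩))), ?_⟩
      rw [hf]
      simp only [F]
      have hyy : (sr (a + (b - a)) : DihedralGroup n) = f (sr 0) := by
        rw [hY]
        congr 1
        ring
      exact ofPair_congr hX.symm hyy

end DihAux

namespace DihAux
variable {n : ℕ} [NeZero n]
set_option linter.unusedSectionVars false

def autHom (heven : Even n) (u : (ZMod n)ˣ) (b : ZMod n) :
    DihedralGroup n →* DihedralGroup n :=
  ofPair (r (u : ZMod n)) (sr b) (pow_n_eq_one heven _) (sr_mul_self b)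
    (by
      have hinv : (r (u : ZMod n) : DihedralGroup n)⁻¹ = r (-(u : ZMod n)) := rfl
      rw [hinv, r_mul_sr, sr_mul_r]
      congr 1
      ring)

theorem autHom_r (heven : Even n) (u : (ZMod n)ˣ) (b : ZMod n) (i : ZMod n) :
    autHom heven u b (r i) = r (i * (u : ZMod n)) := by
  show ofPair _ _ _ _ _ (r i) = _
  rw [ofPair_r, r_pow, ZMod.natCast_zmod_val]

theorem autHom_sr (heven : Even n) (u : (ZMod n)ˣ) (b : ZMod n) (i : ZMod n) :
    autHom heven u b (sr i) = sr (b + i * (u : ZMod n)) := by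
  show ofPair _ _ _ _ _ (sr i) = _
  rw [ofPair_sr, r_pow, ZMod.natCast_zmod_val, sr_mul_r]

theorem autHom_injective (heven : Even n) (u : (ZMod n)ˣ) (b : ZMod n) :
    Function.Injective (autHom heven u b) := by
  rintro (i | i) (j | j) h <;>
    simp only [autHom_r, autHom_sr, r.injEq, sr.injEq, reduceCtorEq] at h
  · rw [r.injEq]
    exact (Units.mul_left_inj u).mp h
  · rw [sr.injEq]
    exact (Units.mul_left_inj u).mp (add_left_cancel h)

/-- The automorphism determined by a unit and a reflection offset. -/
noncomputable def autG (heven : Even n) (p : (ZMod n)ˣ × ZMod n) : MulAut (DihedralGroup n) :=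
  MulEquiv.ofBijective (autHom heven p.1 p.2)
    (Finite.injective_iff_bijective.mp (autHom_injective heven p.1 p.2))

theorem autG_apply (heven : Even n) (p : (ZMod n)ˣ × ZMod n) (g : DihedralGroup n) :
    autG heven p g = autHom heven p.1 p.2 g := rfl

theorem autG_bijective (hn : 4 ≤ n) (heven : Even n) :
    Function.Bijective (autG (n := n) heven) := by
  constructor
  · rintro ⟨u, b⟩ ⟨u', b'⟩ h
    have h1 : autHom heven u b (r 1) = autHom heven u' b' (r 1) := by
      show autG heven (u, b) (r 1) = autG heven (u', b') (r 1)
      rw [h]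
    have h2 : autHom heven u b (sr 0) = autHom heven u' b' (sr 0) := by
      show autG heven (u, b) (sr 0) = autG heven (u', b') (sr 0)
      rw [h]
    simp only [autHom_r, r.injEq, one_mul] at h1
    simp only [autHom_sr, sr.injEq, zero_mul, add_zero] at h2
    rw [Prod.mk.injEq]
    exact ⟨Units.ext h1, h2⟩
  · intro e
    set f : DihedralGroup n →* DihedralGroup n := e.toMonoidHom with hfdef
    have hfe : ∀ g, f g = e g := fun g => rfl
    have hbij : Function.Bijective f := e.bijective
    have hx := pow_n_eq_one heven (f (r 1))
    have hy := hom_rel₁ f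
    have hxy := hom_rel₂ f
    have hf := hom_eq_ofPair f hx hy hxy
    -- f (r 1) is a rotation
    obtain ⟨a, hX⟩ : ∃ a, f (r 1) = r a := by
      rcases hX : f (r 1) with a | a
      · exact ⟨a, rfl⟩
      · exfalso
        have h2 : f (r (2 : ZMod n)) = f (r 0) := by
          have : (r (2 : ZMod n) : DihedralGroup n) = r 1 * r 1 := by
            rw [r_mul_r, one_add_one_eq_two]
          rw [this, map_mul, hX, sr_mul_self, ← one_def, map_one]
        have h3 := hbij.1 h2
        rw [r.injEq] at h3
        have h4 : ((2 : ℕ) : ZMod n) = 0 := by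
          rw [Nat.cast_ofNat]
          exact h3
        rw [ZMod.natCast_eq_zero_iff] at h4
        have := Nat.le_of_dvd (by omega) h4
        omega
    -- key formula
    have key : ∀ i : ZMod n, f (r i) = r (i * a) := by
      intro i
      have : (r i : DihedralGroup n) = r 1 ^ i.val := by
        rw [r_one_pow, ZMod.natCast_zmod_val]
      rw [this, map_pow, hX, r_pow, ZMod.natCast_zmod_val, mul_comm]
    -- f (sr 0) is a reflection
    obtain ⟨b, hY⟩ : ∃ b, f (sr 0) = sr b := by
      rcases hY : f (sr 0) with b | b
      · exfalso
        obtain ⟨g, hg⟩ := hbij.2 (sr 0)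
        rcases g with i | i
        · rw [key i] at hg
          exact absurd hg (by simp)
        · have : (sr i : DihedralGroup n) = sr 0 * r i := by
            rw [sr_mul_r, zero_add]
          rw [this, map_mul, hY, key i, r_mul_r] at hg
          exact absurd hg (by simp)
      · exact ⟨b, rfl⟩
    -- a is a unit
    have hmulinj : Function.Injective (fun i : ZMod n => i * a) := by
      intro i j hij
      have : f (r i) = f (r j) := by
        rw [key i, key j]
        exact congrArg r hij
      exact r.inj (hbij.1 this)
    obtain ⟨c, hc⟩ := (Finite.injective_iff_surjective.mp hmulinj) 1
    have ha : IsUnit a := IsUnit.of_mul_eq_one c (by rw [mul_comm]; exact hc)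
    refine ⟨(ha.unit, b), ?_⟩
    have hhom : autHom heven ha.unit b = f := by
      rw [hf]
      exact ofPair_congr (by rw [ha.unit_spec, ← hX]) hY.symm
    apply MulEquiv.ext
    intro g
    rw [autG_apply, hhom]
    exact hfe g

end DihAux

/-- For even `n ≥ 4`, the dihedral group `D_{2n}` has exactly `n² + 4n + 4` endomorphisms
and exactly `n·φ(n)` automorphisms. -/
theorem card_endomorphisms_dihedral_even (n : ℕ) (hn : 4 ≤ n) (heven : Even n) :
    Nat.card (DihedralGroup n →* DihedralGroup n) = n ^ 2 + 4 * n + 4 ∧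
    Nat.card (MulAut (DihedralGroup n)) = n * Nat.totient n := by
  haveI : NeZero n := ⟨by omega⟩
  constructor
  · have e1 : Nat.card (DihedralGroup n →* DihedralGroup n) = Nat.card (DihAux.T n) :=
      (Nat.card_congr (Equiv.ofBijective _ (DihAux.F_bijective hn heven))).symm
    have hK := DihAux.K_card (n := n) hn heven
    rw [e1]
    simp only [DihAux.T, Nat.card_sum, Nat.card_prod, Nat.card_zmod, hK]
    ring
  · have e2 : Nat.card (MulAut (DihedralGroup n)) = Nat.card ((ZMod n)ˣ × ZMod n) :=
      (Nat.card_congr (Equiv.ofBijective _ (DihAux.autG_bijective hn heven))).symm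
    rw [e2, Nat.card_prod, Nat.card_zmod, Nat.card_eq_fintype_card,
      ZMod.card_units_eq_totient, mul_comm]
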